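/- Let $A$ be the $2q \times 2q$ block companion matrix $A = \begin{pmatrix} \mathcal{A}_1 & \mathcal{A}_2 \\ I_q & 0 \end{pmatrix}$ where $\mathcal{A}_1, \mathcal{A}_2$ are $q \times q$ real matrices. Suppose $\det(I_q - \mathcal{A}_1 z - \mathcal{A}_2 z^2) \neq 0$ for all complex $z$ with $|z| < 1$, and $\mathrm{rk}(I_q - \mathcal{A}_1 - \mathcal{A}_2) = d$ with $0 < d \leq q$. Then $1$ is an eigenvalue of $A$ with geometric multiplicity $q - d$ (in particular, $A$ has at least $q-d$ unit eigenvalues), and all eigenvalues of $A$ lie in the closed unit disk. -/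

import Mathlib

open Matrix

/-- duplication map `v ↦ Sum.elim v v` as a linear map -/
noncomputable def dupMap (q : ℕ) : (Fin q → ℝ) →ₗ[ℝ] (Fin q ⊕ Fin q → ℝ) :=
  (LinearEquiv.sumArrowLequivProdArrow (Fin q) (Fin q) ℝ ℝ).symm.toLinearMap ∘ₗ
    (LinearMap.id.prod LinearMap.id)

lemma dupMap_apply (q : ℕ) (v : Fin q → ℝ) : dupMap q v = Sum.elim v v := rfl

lemma dupMap_injective (q : ℕ) : Function.Injective (dupMap q) := by
  intro a b h
  funext i
  exact congrFun h (Sum.inl i)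

/-- Companion matrix of a cointegrated VAR(2): if `det(I − 𝒜₁ z − 𝒜₂ z²) ≠ 0` for all
`|z| < 1` and `rk(I − 𝒜₁ − 𝒜₂) = d` with `0 < d ≤ q`, then the companion matrix
`A = [[𝒜₁, 𝒜₂], [I, 0]]` has `1` as an eigenvalue with geometric multiplicity `q − d`
(in particular at least `q − d` unit eigenvalues when `d < q`), and all its (complex)
eigenvalues lie in the closed unit disk. -/
theorem stmt7 {q d : ℕ} (A1 A2 : Matrix (Fin q) (Fin q) ℝ)
    (hroots : ∀ z : ℂ, ‖z‖ < 1 →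
      ((1 : Matrix (Fin q) (Fin q) ℂ) - z • A1.map Complex.ofReal -
        z ^ 2 • A2.map Complex.ofReal).det ≠ 0)
    (hrank : ((1 : Matrix (Fin q) (Fin q) ℝ) - A1 - A2).rank = d)
    (hd0 : 0 < d) (hdq : d ≤ q)
    (A : Matrix (Fin q ⊕ Fin q) (Fin q ⊕ Fin q) ℝ)
    (hA : A = Matrix.fromBlocks A1 A2 1 0) :
    Module.finrank ℝ (Module.End.eigenspace (Matrix.toLin' A) (1 : ℝ)) = q - d ∧
    (d < q → Module.End.HasEigenvalue (Matrix.toLin' A) (1 : ℝ)) ∧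
    (∀ μ : ℂ, Module.End.HasEigenvalue (Matrix.toLin' (A.map Complex.ofReal)) μ →
      ‖μ‖ ≤ 1) := by
  subst hA
  set M : Matrix (Fin q) (Fin q) ℝ := 1 - A1 - A2 with hM
  -- kernel dimension of M
  have hker : Module.finrank ℝ (LinearMap.ker M.mulVecLin) = q - d := by
    have h := LinearMap.finrank_range_add_finrank_ker M.mulVecLin
    have h2 : Module.finrank ℝ (Fin q → ℝ) = q := by simp
    have h3 : M.rank = Module.finrank ℝ (LinearMap.range M.mulVecLin) := rfl
    rw [h2] at h
    omega
  -- membership characterization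
  have key : ∀ v : (Fin q ⊕ Fin q) → ℝ,
      v ∈ Module.End.eigenspace (Matrix.toLin' (fromBlocks A1 A2 1 0)) (1 : ℝ) ↔
      (fromBlocks A1 A2 1 0) *ᵥ v = v := by
    intro v
    rw [Module.End.mem_eigenspace_iff, Matrix.toLin'_apply, one_smul]
  have kerM : ∀ y : Fin q → ℝ, y ∈ LinearMap.ker M.mulVecLin ↔
      A1 *ᵥ y + A2 *ᵥ y = y := by
    intro y
    rw [LinearMap.mem_ker, Matrix.mulVecLin_apply, hM, Matrix.sub_mulVec,
      Matrix.sub_mulVec, Matrix.one_mulVec, sub_sub, sub_eq_zero]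
    exact eq_comm
  -- the eigenspace is the image of ker M under the duplication map
  have heig : Module.End.eigenspace (Matrix.toLin' (fromBlocks A1 A2 1 0)) (1 : ℝ) =
      Submodule.map (dupMap q) (LinearMap.ker M.mulVecLin) := by
    ext v
    constructor
    · intro hv
      have hv' := (key v).mp hv
      rw [fromBlocks_mulVec] at hv'
      have h2 : v ∘ Sum.inl = v ∘ Sum.inr := by
        funext i
        have := congrFun hv' (Sum.inr i)
        simpa [Matrix.one_mulVec, Matrix.zero_mulVec] using this
      have h1 : A1 *ᵥ (v ∘ Sum.inl) + A2 *ᵥ (v ∘ Sum.inl) = v ∘ Sum.inl := by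
        funext i
        have := congrFun hv' (Sum.inl i)
        rw [← h2] at this
        simpa using this
      refine ⟨v ∘ Sum.inl, (kerM _).mpr h1, ?_⟩
      rw [dupMap_apply]
      funext i
      cases i with
      | inl i => rfl
      | inr i => exact (congrFun h2 i)
    · rintro ⟨y, hy, rfl⟩
      rw [key, dupMap_apply, fromBlocks_mulVec]
      have hy' := (kerM y).mp hy
      funext i
      cases i with
      | inl i => simpa using congrFun hy' i
      | inr i => simp [Matrix.one_mulVec, Matrix.zero_mulVec]
  have hdim : Module.finrank ℝ
      (Module.End.eigenspace (Matrix.toLin' (fromBlocks A1 A2 1 0)) (1 : ℝ)) = q - d := by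
    rw [heig, ← hker]
    exact (Submodule.equivMapOfInjective _ (dupMap_injective q) _).symm.finrank_eq
  refine ⟨hdim, ?_, ?_⟩
  · intro hdq'
    rw [Module.End.hasEigenvalue_iff]
    intro hbot
    rw [hbot] at hdim
    simp at hdim
    omega
  · intro μ hμ
    by_contra h1
    push_neg at h1
    have hμ0 : μ ≠ 0 := by
      intro h; rw [h] at h1; simp at h1; linarith
    obtain ⟨v, hv⟩ := hμ.exists_hasEigenvector
    have hvv : ((fromBlocks A1 A2 1 0).map Complex.ofReal) *ᵥ v = μ • v := by
      rw [← Matrix.toLin'_apply]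
      exact hv.apply_eq_smul
    have hmap : (fromBlocks A1 A2 1 0).map Complex.ofReal =
        fromBlocks (A1.map Complex.ofReal) (A2.map Complex.ofReal) (1 : Matrix (Fin q) (Fin q) ℂ) (0 : Matrix (Fin q) (Fin q) ℂ) := by
      rw [Matrix.fromBlocks_map,
        Matrix.map_one _ Complex.ofReal_zero Complex.ofReal_one,
        Matrix.map_zero _ Complex.ofReal_zero]
    rw [hmap, fromBlocks_mulVec] at hvv
    set x : Fin q → ℂ := v ∘ Sum.inl with hx
    set y : Fin q → ℂ := v ∘ Sum.inr with hy
    have e1 : (A1.map Complex.ofReal) *ᵥ x + (A2.map Complex.ofReal) *ᵥ y = μ • x := by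
      funext i
      have := congrFun hvv (Sum.inl i)
      simp at this; exact this
    have e2 : x = μ • y := by
      funext i
      have := congrFun hvv (Sum.inr i)
      simp [Matrix.one_mulVec, Matrix.zero_mulVec] at this; exact this
    have hy0 : y ≠ 0 := by
      intro h
      apply hv.2
      funext i
      cases i with
      | inl i =>
        have := congrFun e2 i
        rw [h] at this
        simp at this; exact this
      | inr i => exact congrFun h i
    set z : ℂ := μ⁻¹ with hz
    have hzn : ‖z‖ < 1 := by
      rw [hz, norm_inv]
      rw [inv_lt_one_iff₀]
      right; exact h1
    have hdet := hroots z hzn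
    apply hy0
    apply Matrix.eq_zero_of_mulVec_eq_zero hdet
    -- main computation
    have e3 : μ • ((A1.map Complex.ofReal) *ᵥ y) + (A2.map Complex.ofReal) *ᵥ y
        = (μ * μ) • y := by
      rw [← Matrix.mulVec_smul, ← e2, e1, e2, smul_smul]
    have e4 : z • ((A1.map Complex.ofReal) *ᵥ y) + (z^2) • ((A2.map Complex.ofReal) *ᵥ y)
        = y := by
      have := congrArg (fun w => (z^2 : ℂ) • w) e3
      simp only [smul_add, smul_smul] at this
      have hz1 : z^2 * μ = z := by
        rw [hz, pow_two, mul_assoc, inv_mul_cancel₀ hμ0, mul_one]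
      have hz2 : z^2 * (μ * μ) = 1 := by
        rw [hz, ← sq, inv_pow, inv_mul_cancel₀ (pow_ne_zero 2 hμ0)]
      rw [hz1, hz2, one_smul] at this
      exact this
    rw [Matrix.sub_mulVec, Matrix.sub_mulVec, Matrix.one_mulVec,
      Matrix.smul_mulVec, Matrix.smul_mulVec, sub_sub, e4, sub_self]
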